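/- arXiv:2601.09564 — 2 statements merged into one kernel-verified Lean document; each statement's English description precedes it below -/
import Mathlib

section
/- Let W be a probability measure and Q a σ-finite measure on the same space with W ≪ Q, and let β(ε) be the minimal randomized-test Type II error and F⁺ the upper quantile of the likelihood-ratio CDF F(γ) = W({dW/dQ ≤ γ}). Then for every ε ∈ (0,1): (1 − ε)/F⁺(ε) ≥ β(ε), and for every δ ∈ (0, 1 − ε), β(ε) ≥ δ/F⁺(ε + δ). -/
open MeasureTheory Set ENNReal

variable {Ω : Type*} [MeasurableSpace Ω]

/-- `β(ε)`: the minimal Type II error over randomized tests `T : Ω → [0,1]` with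
Type I error `∫ T dW ≤ ε`. -/
noncomputable def betaNP (Q W : Measure Ω) (ε : ℝ) : ℝ≥0∞ :=
  ⨅ (T : Ω → ℝ) (_ : Measurable T) (_ : ∀ x, T x ∈ Set.Icc (0 : ℝ) 1)
    (_ : ∫⁻ x, ENNReal.ofReal (T x) ∂W ≤ ENNReal.ofReal ε),
    ∫⁻ x, ENNReal.ofReal (1 - T x) ∂Q

/-- The (real-valued) upper likelihood-ratio quantile
`F⁺(ε) = inf{γ : W({dW/dQ ≤ γ}) > ε}`. -/
noncomputable def lrUpperQR (W Q : Measure Ω) (ε : ℝ) : ℝ :=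
  sInf {γ : ℝ | ENNReal.ofReal ε < W {x | W.rnDeriv Q x ≤ ENNReal.ofReal γ}}

section NPhelp
open Filter Topology

variable (Q W : Measure Ω) [IsProbabilityMeasure W] [SigmaFinite Q]

lemma measSet (c : ℝ≥0∞) : MeasurableSet {x | W.rnDeriv Q x ≤ c} :=
  measurableSet_le (Measure.measurable_rnDeriv W Q) measurable_const

variable {Q W}

lemma lr_zero (hWQ : W ≪ Q) : W {x | W.rnDeriv Q x ≤ 0} = 0 := by
  rw [← Measure.setLIntegral_rnDeriv hWQ]
  rw [setLIntegral_congr_fun (measSet Q W 0) (fun x hx => le_antisymm hx zero_le)]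
  simp

lemma F_mono {γ₁ γ₂ : ℝ} (h : γ₁ ≤ γ₂) :
    W {x | W.rnDeriv Q x ≤ ENNReal.ofReal γ₁} ≤ W {x | W.rnDeriv Q x ≤ ENNReal.ofReal γ₂} :=
  measure_mono fun x hx => le_trans hx (ENNReal.ofReal_le_ofReal h)

lemma S_nonempty (hWQ : W ≪ Q) {ε : ℝ} (hε1 : ε < 1) :
    {γ : ℝ | ENNReal.ofReal ε < W {x | W.rnDeriv Q x ≤ ENNReal.ofReal γ}}.Nonempty := by
  have htop : W {x | W.rnDeriv Q x = ∞} = 0 := by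
    apply hWQ
    have h := Measure.rnDeriv_lt_top W Q
    rw [ae_iff] at h
    convert h using 2
    ext x
    simp [lt_top_iff_ne_top]
  have hunion : ⋃ (n : ℕ), {x | W.rnDeriv Q x ≤ ENNReal.ofReal n} = {x | W.rnDeriv Q x ≠ ∞} := by
    ext x
    simp only [mem_iUnion, mem_setOf_eq]
    constructor
    · rintro ⟨n, hn⟩
      exact ne_top_of_le_ne_top ENNReal.ofReal_ne_top hn
    · intro hx
      refine ⟨⌈(W.rnDeriv Q x).toReal⌉₊, ?_⟩
      exact le_trans (le_of_eq (ENNReal.ofReal_toReal hx).symm)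
        (ENNReal.ofReal_le_ofReal (Nat.le_ceil _))
  have h1 : (1 : ℝ≥0∞) ≤ W {x | W.rnDeriv Q x ≠ ∞} := by
    have huniv : ({x | W.rnDeriv Q x = ∞} ∪ {x | W.rnDeriv Q x ≠ ∞}) = Set.univ := by
      ext x; by_cases h : W.rnDeriv Q x = ∞ <;> simp [h]
    calc (1 : ℝ≥0∞) = W Set.univ := (measure_univ).symm
      _ ≤ W {x | W.rnDeriv Q x = ∞} + W {x | W.rnDeriv Q x ≠ ∞} := by
          rw [← huniv]; exact measure_union_le _ _
      _ = W {x | W.rnDeriv Q x ≠ ∞} := by rw [htop, zero_add]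
  have hlt : ENNReal.ofReal ε < W (⋃ (n : ℕ), {x | W.rnDeriv Q x ≤ ENNReal.ofReal n}) := by
    rw [hunion]
    exact lt_of_lt_of_le (by simpa using ENNReal.ofReal_lt_one.mpr hε1) h1
  rw [Directed.measure_iUnion] at hlt
  · rw [lt_iSup_iff] at hlt
    obtain ⟨n, hn⟩ := hlt
    exact ⟨n, hn⟩
  · exact Monotone.directed_le fun m n hmn => fun x hx =>
      le_trans hx (ENNReal.ofReal_le_ofReal (by exact_mod_cast hmn))

lemma quantile_cdf_ge (hWQ : W ≪ Q) {ε : ℝ}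
    (hne : {γ : ℝ | ENNReal.ofReal ε < W {x | W.rnDeriv Q x ≤ ENNReal.ofReal γ}}.Nonempty) :
    ENNReal.ofReal ε ≤ W {x | W.rnDeriv Q x ≤ ENNReal.ofReal (lrUpperQR W Q ε)} := by
  set S := {γ : ℝ | ENNReal.ofReal ε < W {x | W.rnDeriv Q x ≤ ENNReal.ofReal γ}} with hS
  have hγdef : lrUpperQR W Q ε = sInf S := rfl
  set γ := sInf S with hγ
  rw [hγdef]
  have hB : ∀ n : ℕ, MeasurableSet {x | W.rnDeriv Q x ≤ ENNReal.ofReal (γ + 1/(n+1))} :=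
    fun n => measSet Q W _
  have hanti : Antitone (fun n : ℕ => {x | W.rnDeriv Q x ≤ ENNReal.ofReal (γ + 1/(n+1))}) := by
    intro m n hmn x hx
    refine le_trans hx (ENNReal.ofReal_le_ofReal ?_)
    have hc : (m:ℝ) ≤ n := by exact_mod_cast hmn
    have : (1:ℝ)/(n+1) ≤ 1/(m+1) := by
      apply one_div_le_one_div_of_le
      · positivity
      · linarith
    linarith
  have hinter : ⋂ (n : ℕ), {x | W.rnDeriv Q x ≤ ENNReal.ofReal (γ + 1/(n+1))}
      = {x | W.rnDeriv Q x ≤ ENNReal.ofReal γ} := by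
    ext x
    simp only [mem_iInter, mem_setOf_eq]
    constructor
    · intro hx
      have htends : Tendsto (fun n : ℕ => ENNReal.ofReal (γ + 1/(n+1))) atTop
          (𝓝 (ENNReal.ofReal γ)) := by
        have h2 : Tendsto (fun n : ℕ => γ + 1/(n+1 : ℝ)) atTop (𝓝 (γ + 0)) :=
          tendsto_const_nhds.add tendsto_one_div_add_atTop_nhds_zero_nat
        rw [add_zero] at h2
        exact (ENNReal.continuous_ofReal.tendsto _).comp h2
      exact ge_of_tendsto' htends hx
    · intro hx n
      have hp : (0:ℝ) < 1/(n+1:ℝ) := by positivity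
      exact le_trans hx (ENNReal.ofReal_le_ofReal (by linarith))
  have htm := tendsto_measure_iInter_atTop (μ := W) (fun n => (hB n).nullMeasurableSet) hanti
    ⟨0, measure_ne_top _ _⟩
  rw [hinter] at htm
  refine ge_of_tendsto htm (Eventually.of_forall fun n => ?_)
  have hp : (0:ℝ) < 1/(n+1:ℝ) := by positivity
  obtain ⟨s, hsS, hs⟩ := exists_lt_of_csInf_lt hne (show γ < γ + 1/(n+1) by linarith)
  exact le_trans (le_of_lt hsS) (F_mono hs.le)

lemma quantile_pos (hWQ : W ≪ Q) {ε : ℝ} (hε : 0 < ε) (hε1 : ε < 1) :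
    0 < lrUpperQR W Q ε := by
  set S := {γ : ℝ | ENNReal.ofReal ε < W {x | W.rnDeriv Q x ≤ ENNReal.ofReal γ}} with hS
  have hγdef : lrUpperQR W Q ε = sInf S := rfl
  rw [hγdef]
  have hne := S_nonempty hWQ hε1
  have hB : ∀ n : ℕ, MeasurableSet {x | W.rnDeriv Q x ≤ ENNReal.ofReal (1/(n+1))} :=
    fun n => measSet Q W _
  have hanti : Antitone (fun n : ℕ => {x | W.rnDeriv Q x ≤ ENNReal.ofReal (1/(n+1))}) := by
    intro m n hmn x hx
    refine le_trans hx (ENNReal.ofReal_le_ofReal ?_)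
    have hc : (m:ℝ) ≤ n := by exact_mod_cast hmn
    apply one_div_le_one_div_of_le
    · positivity
    · linarith
  have hsub : (⋂ (n : ℕ), {x | W.rnDeriv Q x ≤ ENNReal.ofReal (1/(n+1))}) ⊆
      {x | W.rnDeriv Q x ≤ 0} := by
    intro x hx
    simp only [mem_iInter, mem_setOf_eq] at hx ⊢
    have htends : Tendsto (fun n : ℕ => ENNReal.ofReal (1/(n+1))) atTop
        (𝓝 (ENNReal.ofReal 0)) :=
      (ENNReal.continuous_ofReal.tendsto _).comp tendsto_one_div_add_atTop_nhds_zero_nat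
    simpa using ge_of_tendsto' htends hx
  have htm := tendsto_measure_iInter_atTop (μ := W) (fun n => (hB n).nullMeasurableSet) hanti
    ⟨0, measure_ne_top _ _⟩
  have hzero : W (⋂ (n : ℕ), {x | W.rnDeriv Q x ≤ ENNReal.ofReal (1/(n+1))}) = 0 :=
    le_antisymm (le_trans (measure_mono hsub) (le_of_eq (lr_zero hWQ))) zero_le
  rw [hzero] at htm
  have hev := htm.eventually_lt_const (show (0:ℝ≥0∞) < ENNReal.ofReal ε from
    ENNReal.ofReal_pos.mpr hε)
  obtain ⟨n, hn⟩ := hev.exists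
  have hlb : (1:ℝ)/(n+1) ≤ sInf S := by
    apply le_csInf hne
    intro s hsS
    by_contra hcon
    push_neg at hcon
    exact absurd (lt_of_lt_of_le hsS (F_mono hcon.le)) (not_lt.mpr hn.le)
  calc (0:ℝ) < 1/(n+1) := by positivity
    _ ≤ _ := hlb

lemma quantile_cdf_lt (hWQ : W ≪ Q) {ε : ℝ} (hε : 0 < ε)
    (hpos : 0 < lrUpperQR W Q ε) :
    W {x | W.rnDeriv Q x < ENNReal.ofReal (lrUpperQR W Q ε)} ≤ ENNReal.ofReal ε := by
  set S := {γ : ℝ | ENNReal.ofReal ε < W {x | W.rnDeriv Q x ≤ ENNReal.ofReal γ}} with hS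
  have hγdef : lrUpperQR W Q ε = sInf S := rfl
  rw [hγdef] at hpos ⊢
  set γ := sInf S with hγ
  have hbdd : BddBelow S := by
    refine ⟨0, fun s hsS => ?_⟩
    by_contra hcon
    push_neg at hcon
    have h0 : ENNReal.ofReal s = 0 := ENNReal.ofReal_eq_zero.mpr hcon.le
    rw [hS, mem_setOf_eq, h0] at hsS
    rw [lr_zero hWQ] at hsS
    exact absurd hsS (by simp)
  have hmono : Monotone (fun n : ℕ => {x | W.rnDeriv Q x ≤ ENNReal.ofReal (γ - 1/(n+1))}) := by
    intro m n hmn x hx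
    refine le_trans hx (ENNReal.ofReal_le_ofReal ?_)
    have hc : (m:ℝ) ≤ n := by exact_mod_cast hmn
    have : (1:ℝ)/(n+1) ≤ 1/(m+1) := by
      apply one_div_le_one_div_of_le
      · positivity
      · linarith
    linarith
  have hunion : (⋃ (n : ℕ), {x | W.rnDeriv Q x ≤ ENNReal.ofReal (γ - 1/(n+1))}) =
      {x | W.rnDeriv Q x < ENNReal.ofReal γ} := by
    ext x
    simp only [mem_iUnion, mem_setOf_eq]
    constructor
    · rintro ⟨n, hn⟩
      refine lt_of_le_of_lt hn ((ENNReal.ofReal_lt_ofReal_iff hpos).mpr ?_)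
      have : (0:ℝ) < 1/(n+1:ℝ) := by positivity
      linarith
    · intro hx
      have hne' : W.rnDeriv Q x ≠ ∞ := ne_top_of_lt (lt_of_lt_of_le hx le_top)
      have htr : (W.rnDeriv Q x).toReal < γ :=
        (ENNReal.lt_ofReal_iff_toReal_lt hne').mp hx
      obtain ⟨n, hn⟩ := exists_nat_one_div_lt (show (0:ℝ) < γ - (W.rnDeriv Q x).toReal by linarith)
      refine ⟨n, ?_⟩
      rw [← ENNReal.ofReal_toReal hne']
      exact ENNReal.ofReal_le_ofReal (by linarith)
  rw [← hunion, Directed.measure_iUnion (Monotone.directed_le hmono)]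
  apply iSup_le
  intro n
  have hnot : γ - 1/(n+1) ∉ S := by
    intro hmem
    have h1 := csInf_le hbdd hmem
    have hlt : γ - 1/(n+1) < γ := by
      have : (0:ℝ) < 1/(n+1:ℝ) := by positivity
      linarith
    rw [← hγ] at h1
    linarith
  rw [hS, mem_setOf_eq, not_lt] at hnot
  exact hnot

end NPhelp

/-- For a probability measure `W` and a σ-finite `Q` with `W ≪ Q`, for every
`ε ∈ (0,1)`: `(1 − ε)/F⁺(ε) ≥ β(ε)`, and for every `δ ∈ (0, 1 − ε)`,
`β(ε) ≥ δ/F⁺(ε + δ)`. -/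
theorem betaNP_quantile_bounds (Q W : Measure Ω)
    [IsProbabilityMeasure W] [SigmaFinite Q] (hWQ : W ≪ Q) :
    ∀ ε ∈ Set.Ioo (0 : ℝ) 1,
      betaNP Q W ε ≤ ENNReal.ofReal ((1 - ε) / lrUpperQR W Q ε) ∧
      ∀ δ ∈ Set.Ioo (0 : ℝ) (1 - ε),
        ENNReal.ofReal (δ / lrUpperQR W Q (ε + δ)) ≤ betaNP Q W ε := by
  rintro ε ⟨hε0, hε1⟩
  constructor
  · -- Upper bound
    set γ := lrUpperQR W Q ε with hγdef
    have hγpos : 0 < γ := quantile_pos hWQ hε0 hε1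
    set c := ENNReal.ofReal γ with hcdef
    have hc0 : c ≠ 0 := (ENNReal.ofReal_pos.mpr hγpos).ne'
    have hctop : c ≠ ∞ := ENNReal.ofReal_ne_top
    have hrn := Measure.measurable_rnDeriv W Q
    have hLmeas : MeasurableSet {x | W.rnDeriv Q x < c} := measurableSet_lt hrn measurable_const
    have hEmeas : MeasurableSet {x | W.rnDeriv Q x = c} := hrn (measurableSet_singleton c)
    set L := {x | W.rnDeriv Q x < c} with hLdef
    set E := {x | W.rnDeriv Q x = c} with hEdef
    set a := W L with hadef
    set m := W E with hmdef
    have ha : a ≤ ENNReal.ofReal ε := quantile_cdf_lt hWQ hε0 hγpos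
    have hge : ENNReal.ofReal ε ≤ W {x | W.rnDeriv Q x ≤ c} :=
      quantile_cdf_ge hWQ (S_nonempty hWQ hε1)
    have hsplit : W {x | W.rnDeriv Q x ≤ c} = a + m := by
      have hLE : {x | W.rnDeriv Q x ≤ c} = L ∪ E := by
        rw [hLdef, hEdef]
        ext x
        simp only [mem_setOf_eq, mem_union]
        exact le_iff_lt_or_eq
      have hdisj : Disjoint L E := by
        rw [Set.disjoint_left]
        intro x hxL hxE
        exact (ne_of_lt hxL) hxE
      rw [hLE, measure_union hdisj hEmeas]
    have haR : a.toReal ≤ ε := by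
      have h := ENNReal.toReal_mono ENNReal.ofReal_ne_top ha
      rwa [ENNReal.toReal_ofReal hε0.le] at h
    set t := if m = 0 then (0:ℝ) else (ε - a.toReal)/m.toReal with htdef
    have htIcc : t ∈ Set.Icc (0:ℝ) 1 := by
      by_cases hm : m = 0
      · rw [htdef, if_pos hm]
        exact ⟨le_refl 0, zero_le_one⟩
      · have hmpos : 0 < m.toReal := ENNReal.toReal_pos hm (measure_ne_top _ _)
        have hεle : ε ≤ a.toReal + m.toReal := by
          have h1 : ENNReal.ofReal ε ≤ a + m := hsplit ▸ hge
          have h2 := ENNReal.toReal_mono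
            (by exact ENNReal.add_ne_top.mpr ⟨measure_ne_top _ _, measure_ne_top _ _⟩) h1
          rwa [ENNReal.toReal_ofReal hε0.le,
            ENNReal.toReal_add (measure_ne_top _ _) (measure_ne_top _ _)] at h2
        rw [htdef, if_neg hm]
        constructor
        · apply div_nonneg _ hmpos.le
          linarith
        · rw [div_le_one hmpos]
          linarith
    set T := fun x => if W.rnDeriv Q x < c then (1:ℝ) else if W.rnDeriv Q x = c then t else 0
      with hTdef
    have hTmeas : Measurable T :=
      Measurable.ite hLmeas measurable_const
        (Measurable.ite hEmeas measurable_const measurable_const)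
    have hTIcc : ∀ x, T x ∈ Set.Icc (0:ℝ) 1 := by
      intro x
      rw [hTdef]
      dsimp only
      split_ifs
      · exact ⟨zero_le_one, le_refl 1⟩
      · exact htIcc
      · exact ⟨le_refl 0, zero_le_one⟩
    have hint : (∫⁻ x, ENNReal.ofReal (T x) ∂W) = ENNReal.ofReal ε := by
      have hfun : (fun x => ENNReal.ofReal (T x)) =
          fun x => L.indicator (fun _ => (1:ℝ≥0∞)) x + E.indicator (fun _ => ENNReal.ofReal t) x := by
        funext x
        rw [hTdef]
        dsimp only
        by_cases hxL : W.rnDeriv Q x < c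
        · rw [if_pos hxL, Set.indicator_of_mem (show x ∈ L from hxL),
            Set.indicator_of_notMem (show x ∉ E from fun h => (ne_of_lt hxL) h),
            ENNReal.ofReal_one, add_zero]
        · rw [if_neg hxL, Set.indicator_of_notMem (show x ∉ L from hxL), zero_add]
          by_cases hxE : W.rnDeriv Q x = c
          · rw [if_pos hxE, Set.indicator_of_mem (show x ∈ E from hxE)]
          · rw [if_neg hxE, Set.indicator_of_notMem (show x ∉ E from hxE), ENNReal.ofReal_zero]
      rw [hfun, lintegral_add_left (measurable_const.indicator hLmeas),
        lintegral_indicator_const hLmeas, lintegral_indicator_const hEmeas, one_mul]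
      by_cases hm : m = 0
      · have haε : a = ENNReal.ofReal ε := by
          refine le_antisymm ha ?_
          have := hsplit ▸ hge
          rwa [hm, add_zero] at this
        rw [← hmdef, hm, mul_zero, add_zero]
        exact haε
      · have hmtop : m ≠ ∞ := measure_ne_top _ _
        have hmpos : 0 < m.toReal := ENNReal.toReal_pos hm hmtop
        have h1 : ENNReal.ofReal t = (ENNReal.ofReal ε - a) / m := by
          rw [htdef, if_neg hm, ENNReal.ofReal_div_of_pos hmpos,
            ENNReal.ofReal_sub ε ENNReal.toReal_nonneg,
            ENNReal.ofReal_toReal hmtop, ENNReal.ofReal_toReal (measure_ne_top _ _)]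
        rw [← hmdef, ← hadef, h1, ENNReal.div_mul_cancel hm hmtop, add_tsub_cancel_of_le ha]
    have hg : Measurable fun x => ENNReal.ofReal (1 - T x) :=
      (measurable_const.sub hTmeas).ennreal_ofReal
    have hpoint : ∀ x, ENNReal.ofReal (1 - T x) ≤ (W.rnDeriv Q x / c) * ENNReal.ofReal (1 - T x) := by
      intro x
      by_cases hx : W.rnDeriv Q x < c
      · have hT1 : T x = 1 := by rw [hTdef]; exact if_pos hx
        rw [hT1, sub_self, ENNReal.ofReal_zero, mul_zero]
      · have h1 : (1:ℝ≥0∞) ≤ W.rnDeriv Q x / c :=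
          (ENNReal.le_div_iff_mul_le (Or.inl hc0) (Or.inl hctop)).mpr
            (by rw [one_mul]; exact not_lt.mp hx)
        exact le_mul_of_one_le_left' h1
    have hbound : (∫⁻ x, ENNReal.ofReal (1 - T x) ∂Q) ≤ ENNReal.ofReal ((1-ε)/γ) := by
      calc ∫⁻ x, ENNReal.ofReal (1 - T x) ∂Q
          ≤ ∫⁻ x, (W.rnDeriv Q x / c) * ENNReal.ofReal (1 - T x) ∂Q := lintegral_mono hpoint
        _ = c⁻¹ * ∫⁻ x, W.rnDeriv Q x * ENNReal.ofReal (1 - T x) ∂Q := by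
            rw [← lintegral_const_mul (f := fun x => W.rnDeriv Q x * ENNReal.ofReal (1 - T x)) _ (hrn.mul hg)]
            congr 1
            funext x
            rw [div_eq_mul_inv, mul_comm (W.rnDeriv Q x) c⁻¹, mul_assoc]
        _ = c⁻¹ * ∫⁻ x, ENNReal.ofReal (1 - T x) ∂W := by
            rw [lintegral_rnDeriv_mul hWQ hg.aemeasurable]
        _ = c⁻¹ * ENNReal.ofReal (1 - ε) := by
            congr 1
            have heq : ∀ x, ENNReal.ofReal (1 - T x) = 1 - ENNReal.ofReal (T x) := fun x => by
              rw [ENNReal.ofReal_sub _ (hTIcc x).1, ENNReal.ofReal_one]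
            rw [lintegral_congr heq,
              lintegral_sub hTmeas.ennreal_ofReal (by rw [hint]; exact ENNReal.ofReal_ne_top)
                (ae_of_all _ fun x => ENNReal.ofReal_le_one.mpr (hTIcc x).2),
              lintegral_one, measure_univ, hint, ← ENNReal.ofReal_one,
              ← ENNReal.ofReal_sub _ hε0.le]
        _ = ENNReal.ofReal ((1-ε)/γ) := by
            rw [ENNReal.ofReal_div_of_pos hγpos, div_eq_mul_inv, mul_comm]
    calc betaNP Q W ε ≤ ∫⁻ x, ENNReal.ofReal (1 - T x) ∂Q := by
          refine iInf_le_of_le T ?_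
          refine iInf_le_of_le hTmeas ?_
          refine iInf_le_of_le hTIcc ?_
          exact iInf_le_of_le (le_of_eq hint) (le_refl _)
      _ ≤ _ := hbound
  · -- Lower bound
    rintro δ ⟨hδ0, hδ1⟩
    set γ := lrUpperQR W Q (ε + δ) with hγdef
    rcases le_or_gt γ 0 with hγ | hγpos
    · have hdiv : δ/γ ≤ 0 := div_nonpos_iff.mpr (Or.inl ⟨hδ0.le, hγ⟩)
      rw [ENNReal.ofReal_eq_zero.mpr hdiv]
      exact zero_le
    · have hne : {γ' : ℝ | ENNReal.ofReal (ε + δ) <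
          W {x | W.rnDeriv Q x ≤ ENNReal.ofReal γ'}}.Nonempty := by
        by_contra hc
        rw [Set.not_nonempty_iff_eq_empty] at hc
        rw [hγdef] at hγpos
        unfold lrUpperQR at hγpos
        rw [hc, Real.sInf_empty] at hγpos
        exact lt_irrefl 0 hγpos
      have hF : ENNReal.ofReal (ε + δ) ≤
          W {x | W.rnDeriv Q x ≤ ENNReal.ofReal γ} := quantile_cdf_ge hWQ hne
      set c := ENNReal.ofReal γ with hcdef
      have hc0 : c ≠ 0 := (ENNReal.ofReal_pos.mpr hγpos).ne'
      have hctop : c ≠ ∞ := ENNReal.ofReal_ne_top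
      set A := {x | W.rnDeriv Q x ≤ c} with hAdef
      have hA : MeasurableSet A := measSet Q W c
      rw [betaNP]
      refine le_iInf fun T => le_iInf fun hTmeas => le_iInf fun hTIcc => le_iInf fun hcon => ?_
      have hg : Measurable fun x => ENNReal.ofReal (1 - T x) :=
        (measurable_const.sub hTmeas).ennreal_ofReal
      have h1 : (∫⁻ x in A, ENNReal.ofReal (1 - T x) ∂W) ≤
          c * ∫⁻ x in A, ENNReal.ofReal (1 - T x) ∂Q := by
        rw [← setLIntegral_rnDeriv_mul hWQ hg.aemeasurable hA,
          ← lintegral_const_mul _ hg]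
        refine lintegral_mono_ae ((ae_restrict_iff' hA).mpr (ae_of_all _ fun x hx => ?_))
        exact mul_le_mul_left hx _
      have h2 : ENNReal.ofReal δ ≤ ∫⁻ x in A, ENNReal.ofReal (1 - T x) ∂W := by
        have heq : ∀ x, ENNReal.ofReal (1 - T x) = 1 - ENNReal.ofReal (T x) := fun x => by
          rw [ENNReal.ofReal_sub _ (hTIcc x).1, ENNReal.ofReal_one]
        have hTint : (∫⁻ x in A, ENNReal.ofReal (T x) ∂W) ≤ ENNReal.ofReal ε :=
          le_trans (setLIntegral_le_lintegral _ _) hcon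
        have hfin : (∫⁻ x in A, ENNReal.ofReal (T x) ∂W) ≠ ∞ :=
          ne_top_of_le_ne_top ENNReal.ofReal_ne_top hTint
        have hsub : (∫⁻ x in A, ENNReal.ofReal (1 - T x) ∂W) =
            W A - ∫⁻ x in A, ENNReal.ofReal (T x) ∂W := by
          rw [lintegral_congr heq,
            lintegral_sub hTmeas.ennreal_ofReal hfin
              (ae_of_all _ fun x => ENNReal.ofReal_le_one.mpr (hTIcc x).2),
            lintegral_one, Measure.restrict_apply_univ]
        calc ENNReal.ofReal δ = ENNReal.ofReal (ε + δ) - ENNReal.ofReal ε := by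
              rw [ENNReal.ofReal_add hε0.le hδ0.le,
                ENNReal.add_sub_cancel_left ENNReal.ofReal_ne_top]
          _ ≤ W A - ∫⁻ x in A, ENNReal.ofReal (T x) ∂W := tsub_le_tsub hF hTint
          _ = ∫⁻ x in A, ENNReal.ofReal (1 - T x) ∂W := hsub.symm
      have h3 : ENNReal.ofReal δ ≤ c * ∫⁻ x, ENNReal.ofReal (1 - T x) ∂Q :=
        le_trans h2 (le_trans h1 (mul_le_mul_right (setLIntegral_le_lintegral _ _) c))
      calc ENNReal.ofReal (δ/γ) = ENNReal.ofReal δ / c := by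
            rw [hcdef, ENNReal.ofReal_div_of_pos hγpos]
        _ ≤ _ := ENNReal.div_le_of_le_mul (by rwa [mul_comm] at h3)
end

section
/- Let W, Q be σ-finite measures with W ≪ Q ≪ W (mutually absolutely continuous after restriction), η(1) < ∞, and finite masses as needed. Define β_{Q,W} and β_{W,Q} as the minimal randomized Type II errors in the two directions. Then β_{W,Q}(β_{Q,W}(ε)) = ε for all ε ∈ (0, W(Ω)), i.e., the two β functions are lower-semicontinuous inverses of each other on the nontrivial range. -/
open MeasureTheory Set ENNReal

variable {Ω : Type*} [MeasurableSpace Ω]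

/-- Pointwise Neyman–Pearson inequality, direction 1. -/
private lemma np_pw1 {c g u : ℝ≥0∞} (hc0 : c ≠ 0) (hct : c ≠ ⊤) (hg : g ≤ 1)
    (hu : u ≠ ⊤) {t : ℝ} (ht0 : 0 ≤ t) (ht1 : t ≤ 1) :
    (if u < c then 0 else if u = c then 1 - g else 1) +
      c⁻¹ * (u * (if u < c then 1 else if u = c then g else 0))
    ≤ ENNReal.ofReal (1 - t) + c⁻¹ * (u * ENNReal.ofReal t) := by
  have ht' : ENNReal.ofReal t ≤ 1 := ENNReal.ofReal_le_one.mpr ht1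
  have hsub : ENNReal.ofReal (1 - t) = 1 - ENNReal.ofReal t := by
    rw [ENNReal.ofReal_sub _ ht0, ENNReal.ofReal_one]
  set t' := ENNReal.ofReal t with ht'def
  have hcc : c⁻¹ * c = 1 := ENNReal.inv_mul_cancel hc0 hct
  rw [hsub]
  rcases lt_trichotomy u c with h | h | h
  · simp only [if_pos h]
    have hu1 : c⁻¹ * u ≤ 1 := by
      calc c⁻¹ * u ≤ c⁻¹ * c := mul_le_mul_right h.le _
        _ = 1 := hcc
    have hsplit : u = u * t' + u * (1 - t') := by
      rw [← mul_add, add_tsub_cancel_of_le ht', mul_one]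
    calc (0 : ℝ≥0∞) + c⁻¹ * (u * 1) = c⁻¹ * u := by rw [zero_add, mul_one]
      _ = c⁻¹ * (u * t') + c⁻¹ * (u * (1 - t')) := by rw [← mul_add, ← hsplit]
      _ ≤ c⁻¹ * (u * t') + (1 - t') := by
          refine add_le_add_right ?_ _
          calc c⁻¹ * (u * (1 - t')) = (c⁻¹ * u) * (1 - t') := by rw [mul_assoc]
            _ ≤ 1 * (1 - t') := mul_le_mul_left hu1 _
            _ = 1 - t' := one_mul _
      _ = (1 - t') + c⁻¹ * (u * t') := add_comm _ _
  · rw [h]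
    rw [if_neg (lt_irrefl c), if_neg (lt_irrefl c), if_pos rfl, if_pos rfl]
    have e1 : (1 - g) + c⁻¹ * (c * g) = 1 := by
      rw [← mul_assoc, hcc, one_mul, tsub_add_cancel_of_le hg]
    have e2 : (1 - t') + c⁻¹ * (c * t') = 1 := by
      rw [← mul_assoc, hcc, one_mul, tsub_add_cancel_of_le ht']
    exact le_of_eq (e1.trans e2.symm)
  · have hnl : ¬ u < c := not_lt.mpr h.le
    have hne : u ≠ c := h.ne'
    simp only [if_neg hnl, if_neg hne]
    have h1 : (1 : ℝ≥0∞) ≤ c⁻¹ * u := by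
      rw [← hcc]; exact mul_le_mul_right h.le _
    calc (1 : ℝ≥0∞) + c⁻¹ * (u * 0) = (1 - t') + t' := by
          rw [mul_zero, mul_zero, add_zero, tsub_add_cancel_of_le ht']
      _ ≤ (1 - t') + c⁻¹ * (u * t') := by
          refine add_le_add_right ?_ _
          calc t' = 1 * t' := (one_mul _).symm
            _ ≤ (c⁻¹ * u) * t' := mul_le_mul_left h1 _
            _ = c⁻¹ * (u * t') := mul_assoc _ _ _

/-- Pointwise Neyman–Pearson inequality, direction 2. -/
private lemma np_pw2 {c g u : ℝ≥0∞} (hct : c ≠ ⊤) (hg : g ≤ 1)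
    {s : ℝ} (hs0 : 0 ≤ s) (hs1 : s ≤ 1) :
    u * (if u < c then 1 else if u = c then g else 0) +
      c * (if u < c then 0 else if u = c then 1 - g else 1)
    ≤ u * ENNReal.ofReal (1 - s) + c * ENNReal.ofReal s := by
  have hs' : ENNReal.ofReal s ≤ 1 := ENNReal.ofReal_le_one.mpr hs1
  have hsub : ENNReal.ofReal (1 - s) = 1 - ENNReal.ofReal s := by
    rw [ENNReal.ofReal_sub _ hs0, ENNReal.ofReal_one]
  set s' := ENNReal.ofReal s with hs'def
  rw [hsub]
  rcases lt_trichotomy u c with h | h | h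
  · simp only [if_pos h]
    calc u * 1 + c * 0 = u * (1 - s') + u * s' := by
          rw [mul_zero, add_zero, ← mul_add, tsub_add_cancel_of_le hs', mul_one]
      _ ≤ u * (1 - s') + c * s' := add_le_add_right (mul_le_mul_left h.le _) _
  · rw [h]
    rw [if_neg (lt_irrefl c), if_neg (lt_irrefl c), if_pos rfl, if_pos rfl]
    refine le_of_eq ?_
    rw [← mul_add, ← mul_add, add_tsub_cancel_of_le hg, tsub_add_cancel_of_le hs']
  · have hnl : ¬ u < c := not_lt.mpr h.le
    have hne : u ≠ c := h.ne'
    simp only [if_neg hnl, if_neg hne]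
    calc u * 0 + c * 1 = c * (1 - s') + c * s' := by
          rw [mul_zero, zero_add, mul_one, ← mul_add, tsub_add_cancel_of_le hs', mul_one]
      _ ≤ u * (1 - s') + c * s' := add_le_add_left (mul_le_mul_left h.le _) _

/-- Inversion identity: for mutually absolutely continuous σ-finite `W, Q` with
`η(1) = ∫ min(dW/dQ, 1) dQ < ∞`, the two `β` functions are inverses of each other
on the nontrivial range: `β_{W,Q}(β_{Q,W}(ε)) = ε` for all `ε ∈ (0, W(Ω))`. -/
theorem betaNP_inversion (Q W : Measure Ω)
    [SigmaFinite W] [SigmaFinite Q]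
    (hWQ : W ≪ Q) (hQW : Q ≪ W)
    (h1 : ∫⁻ x, min (W.rnDeriv Q x) 1 ∂Q ≠ ⊤) :
    ∀ ε : ℝ, 0 < ε → ENNReal.ofReal ε < W Set.univ →
      betaNP W Q ((betaNP Q W ε).toReal) = ENNReal.ofReal ε := by
  intro ε hε hεW
  set f := W.rnDeriv Q with hfdef
  have hfm : Measurable f := Measure.measurable_rnDeriv W Q
  have hWd : Q.withDensity f = W := Measure.withDensity_rnDeriv_eq W Q hWQ
  set ε' := ENNReal.ofReal ε with hε'def
  have hε'0 : ε' ≠ 0 := by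
    simp only [hε'def, ne_eq, ENNReal.ofReal_eq_zero, not_le]; exact hε
  have hε't : ε' ≠ ⊤ := ENNReal.ofReal_ne_top
  have hWA : ∀ {A : Set Ω}, MeasurableSet A → W A = ∫⁻ x in A, f x ∂Q := by
    intro A hA; rw [← hWd, withDensity_apply _ hA]
  have hflt : ∀ᵐ x ∂Q, f x < ⊤ := Measure.rnDeriv_lt_top W Q
  -- conversion of integrals
  have hW_int : ∀ (h : Ω → ℝ≥0∞), Measurable h →
      ∫⁻ x, h x ∂W = ∫⁻ x, f x * h x ∂Q := by
    intro h hh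
    rw [← hWd, lintegral_withDensity_eq_lintegral_mul _ hfm hh]
    rfl
  -- finiteness of W {f ≤ t} for finite t
  have hfin : ∀ t : ℝ≥0∞, t ≠ ⊤ → W {x | f x ≤ t} ≠ ⊤ := by
    intro t ht
    have hA : MeasurableSet {x | f x ≤ t} := hfm measurableSet_Iic
    rw [hWA hA]
    have hb : ∀ x ∈ {x | f x ≤ t}, f x ≤ (t + 1) * min (f x) 1 := by
      intro x hx
      rcases le_total (f x) 1 with h | h
      · rw [min_eq_left h]
        calc f x = 1 * f x := (one_mul _).symm
          _ ≤ (t + 1) * f x := mul_le_mul_left (by simp) _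
      · rw [min_eq_right h]
        calc f x ≤ t := hx
          _ ≤ (t + 1) * 1 := by simp
    have : ∫⁻ x in {x | f x ≤ t}, f x ∂Q ≤ (t + 1) * ∫⁻ x, min (f x) 1 ∂Q := by
      calc ∫⁻ x in {x | f x ≤ t}, f x ∂Q
          ≤ ∫⁻ x in {x | f x ≤ t}, (t + 1) * min (f x) 1 ∂Q :=
            setLIntegral_mono ((hfm.min measurable_const).const_mul _) hb
        _ ≤ ∫⁻ x, (t + 1) * min (f x) 1 ∂Q :=
            setLIntegral_le_lintegral _ _
        _ = (t + 1) * ∫⁻ x, min (f x) 1 ∂Q :=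
            lintegral_const_mul _ (hfm.min measurable_const)
    exact ne_top_of_le_ne_top (ENNReal.mul_ne_top (by simp [ht]) h1) this
  -- monotonicity of t ↦ W {f < t}
  have hmono : ∀ {s t : ℝ≥0∞}, s ≤ t → W {x | f x < s} ≤ W {x | f x < t} :=
    fun h => measure_mono (fun x hx => lt_of_lt_of_le hx h)
  have hmlt : ∀ t : ℝ≥0∞, MeasurableSet {x | f x < t} := fun t => hfm measurableSet_Iio
  have hmeqs : ∀ t : ℝ≥0∞, MeasurableSet {x | f x = t} := fun t => hfm (measurableSet_singleton t)
  set S : Set ℝ≥0∞ := {t | ε' < W {x | f x < t}} with hSdef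
  set c : ℝ≥0∞ := sInf S with hcdef
  have hmge : MeasurableSet {x | c ≤ f x} := hfm measurableSet_Ici
  have hupper : ∀ {t}, t ∉ S → t ≤ c := by
    intro t ht
    apply le_sInf
    intro s hs
    by_contra hlt
    push_neg at hlt
    exact ht (lt_of_lt_of_le hs (hmono hlt.le))
  -- c ≠ ⊤
  have hctop : c ≠ ⊤ := by
    have hmonoN : Monotone (fun n : ℕ => {x | f x < (n : ℝ≥0∞)}) := by
      intro m n hmn x hx
      simp only [mem_setOf_eq] at hx ⊢
      exact lt_of_lt_of_le hx (by exact_mod_cast hmn)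
    have hU : (⋃ n : ℕ, {x | f x < (n : ℝ≥0∞)}) = {x | f x < ⊤} := by
      ext x
      simp only [mem_iUnion, mem_setOf_eq]
      constructor
      · rintro ⟨n, hn⟩; exact lt_of_lt_of_le hn le_top
      · intro hx; exact ENNReal.exists_nat_gt hx.ne
    have hWuniv : W {x | f x < ⊤} = W univ := by
      have hae : ∀ᵐ x ∂W, f x < ⊤ := hWQ.ae_le hflt
      have : {x | f x < ⊤} =ᵐ[W] univ := by
        rw [Filter.eventuallyEq_univ]
        exact hae
      exact measure_congr this
    have := hmonoN.measure_iUnion (μ := W)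
    rw [hU, hWuniv] at this
    have hex : ∃ n : ℕ, ε' < W {x | f x < (n : ℝ≥0∞)} := by
      rw [← lt_iSup_iff, ← this]
      exact hεW
    obtain ⟨n, hn⟩ := hex
    exact ne_top_of_le_ne_top (ENNReal.natCast_ne_top n) (sInf_le hn)
  -- c ≠ 0
  have hc0 : c ≠ 0 := by
    have hW0 : W {x | f x = 0} = 0 := by
      rw [hWA (hmeqs 0)]
      calc ∫⁻ x in {x | f x = 0}, f x ∂Q = ∫⁻ _ in {x | f x = 0}, 0 ∂Q :=
            setLIntegral_congr_fun (hmeqs 0)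
              (fun x hx => hx)
        _ = 0 := by simp
    have hanti : Antitone (fun n : ℕ => {x | f x < ((n : ℝ≥0∞) + 1)⁻¹}) := by
      intro m n hmn x hx
      simp only [mem_setOf_eq] at hx ⊢
      refine lt_of_lt_of_le hx ?_
      exact ENNReal.inv_le_inv.mpr (by exact_mod_cast add_le_add_left (Nat.cast_le.mpr hmn) 1)
    have hI : (⋂ n : ℕ, {x | f x < ((n : ℝ≥0∞) + 1)⁻¹}) = {x | f x = 0} := by
      ext x
      simp only [mem_iInter, mem_setOf_eq]
      constructor
      · intro h
        by_contra h0
        obtain ⟨n, hn⟩ := ENNReal.exists_inv_nat_lt h0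
        refine absurd (h n) (not_lt.mpr ?_)
        calc ((n : ℝ≥0∞) + 1)⁻¹ ≤ (n : ℝ≥0∞)⁻¹ := ENNReal.inv_le_inv.mpr (by simp)
          _ ≤ f x := hn.le
      · intro h n
        rw [h]
        exact ENNReal.inv_pos.mpr (by simp)
    have hfin0 : ∃ n : ℕ, W {x | f x < (((n : ℝ≥0∞)) + 1)⁻¹} ≠ ⊤ := by
      refine ⟨0, ne_top_of_le_ne_top (hfin 1 one_ne_top) (measure_mono ?_)⟩
      intro x hx
      simp only [mem_setOf_eq] at hx ⊢
      refine le_trans hx.le ?_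
      simp
    have hiInf := hanti.measure_iInter (μ := W)
      (fun n => (hmlt _).nullMeasurableSet) hfin0
    rw [hI, hW0] at hiInf
    have hex : ∃ n : ℕ, W {x | f x < (((n : ℝ≥0∞)) + 1)⁻¹} < ε' := by
      by_contra hno
      push_neg at hno
      have : ε' ≤ 0 := hiInf ▸ le_iInf hno
      exact hε'0 (le_antisymm (by simpa using this) zero_le)
    obtain ⟨n, hn⟩ := hex
    have : ((n : ℝ≥0∞) + 1)⁻¹ ≤ c := hupper (not_lt.mpr hn.le)
    intro hc
    rw [hc] at this
    simp only [nonpos_iff_eq_zero, ENNReal.inv_eq_zero] at this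
    exact (by simp : ((n : ℝ≥0∞) + 1) ≠ ⊤) this
  -- W {f < c} ≤ ε'
  have hFle : W {x | f x < c} ≤ ε' := by
    have hmono2 : Monotone (fun n : ℕ => {x | f x < c - ((n : ℝ≥0∞) + 1)⁻¹}) := by
      intro m n hmn x hx
      simp only [mem_setOf_eq] at hx ⊢
      refine lt_of_lt_of_le hx (tsub_le_tsub_left ?_ c)
      exact ENNReal.inv_le_inv.mpr (by exact_mod_cast add_le_add_left (Nat.cast_le.mpr hmn) 1)
    have hU2 : {x | f x < c} = ⋃ n : ℕ, {x | f x < c - ((n : ℝ≥0∞) + 1)⁻¹} := by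
      ext x
      simp only [mem_iUnion, mem_setOf_eq]
      constructor
      · intro hx
        have hxt : f x ≠ ⊤ := hx.ne_top
        have hpos : c - f x ≠ 0 := by
          rw [ne_eq, tsub_eq_zero_iff_le]
          exact not_le.mpr hx
        obtain ⟨n, hn⟩ := ENNReal.exists_inv_nat_lt hpos
        refine ⟨n, ?_⟩
        rw [lt_tsub_iff_right]
        calc f x + ((n : ℝ≥0∞) + 1)⁻¹ ≤ f x + (n : ℝ≥0∞)⁻¹ :=
              add_le_add_right (ENNReal.inv_le_inv.mpr le_self_add) _
          _ < f x + (c - f x) := by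
              exact ENNReal.add_lt_add_left hxt hn
          _ = c := add_tsub_cancel_of_le hx.le
      · rintro ⟨n, hn⟩
        exact hn.trans_le tsub_le_self
    rw [hU2, hmono2.measure_iUnion]
    refine iSup_le fun n => ?_
    have hnot : c - ((n : ℝ≥0∞) + 1)⁻¹ ∉ S := by
      intro hmem
      refine absurd (sInf_le hmem) (not_le.mpr ?_)
      exact ENNReal.sub_lt_self hctop hc0 (by simp)
    exact not_lt.mp hnot
  -- ε' ≤ W {f ≤ c}
  have hGe : ε' ≤ W {x | f x ≤ c} := by
    have hanti2 : Antitone (fun n : ℕ => {x | f x < c + ((n : ℝ≥0∞) + 1)⁻¹}) := by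
      intro m n hmn x hx
      simp only [mem_setOf_eq] at hx ⊢
      refine lt_of_lt_of_le hx (add_le_add_right ?_ c)
      exact ENNReal.inv_le_inv.mpr (by exact_mod_cast add_le_add_left (Nat.cast_le.mpr hmn) 1)
    have hI2 : {x | f x ≤ c} = ⋂ n : ℕ, {x | f x < c + ((n : ℝ≥0∞) + 1)⁻¹} := by
      ext x
      simp only [mem_iInter, mem_setOf_eq]
      constructor
      · intro hx n
        exact lt_of_le_of_lt hx (ENNReal.lt_add_right hctop (by simp))
      · intro h
        by_contra hlt
        push_neg at hlt
        have hxt : f x ≠ ⊤ := by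
          have h0 := h 0
          exact ne_top_of_lt h0
        have hpos : f x - c ≠ 0 := by
          rw [ne_eq, tsub_eq_zero_iff_le]
          exact not_le.mpr hlt
        obtain ⟨n, hn⟩ := ENNReal.exists_inv_nat_lt hpos
        refine absurd (h n) (not_lt.mpr ?_)
        calc c + ((n : ℝ≥0∞) + 1)⁻¹ ≤ c + (n : ℝ≥0∞)⁻¹ :=
              add_le_add_right (ENNReal.inv_le_inv.mpr le_self_add) _
          _ ≤ c + (f x - c) := add_le_add_right hn.le _
          _ = f x := add_tsub_cancel_of_le hlt.le
    have hfin2 : ∃ n : ℕ, W {x | f x < c + (((n : ℝ≥0∞)) + 1)⁻¹} ≠ ⊤ := by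
      refine ⟨0, ne_top_of_le_ne_top (hfin (c + 1) (by simp [hctop])) (measure_mono ?_)⟩
      intro x hx
      simp only [mem_setOf_eq] at hx ⊢
      refine le_trans hx.le (add_le_add_right ?_ c)
      simp
    rw [hI2, hanti2.measure_iInter (fun n => (hmlt _).nullMeasurableSet) hfin2]
    refine le_iInf fun n => ?_
    have hct : c < c + ((n : ℝ≥0∞) + 1)⁻¹ := ENNReal.lt_add_right hctop (by simp)
    obtain ⟨s, hsS, hst⟩ := sInf_lt_iff.mp hct
    exact le_of_lt (lt_of_lt_of_le hsS (hmono hst.le))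
  -- split W {f ≤ c}
  set F := W {x | f x < c} with hFdef
  set D := W {x | f x = c} with hDdef
  have hseq : {x | f x < c} ∪ {x | f x = c} = {x | f x ≤ c} := by
    ext x
    simp only [mem_union, mem_setOf_eq]
    exact ⟨fun h => h.elim le_of_lt le_of_eq, fun h => lt_or_eq_of_le h⟩
  have hsplit : W {x | f x ≤ c} = F + D := by
    rw [← hseq, measure_union ?_ (hmeqs c)]
    intro A hA1 hA2 x hx
    exact absurd ((hA2 hx : f x = c)) (ne_of_lt (hA1 hx : f x < c))
  have hFt : F ≠ ⊤ := by
    refine ne_top_of_le_ne_top (hfin c hctop) (measure_mono ?_)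
    intro x hx
    simp only [mem_setOf_eq] at hx ⊢
    exact le_of_lt hx
  have hDt : D ≠ ⊤ := by
    refine ne_top_of_le_ne_top (hfin c hctop) (measure_mono ?_)
    intro x hx
    simp only [mem_setOf_eq] at hx ⊢
    exact le_of_eq hx
  have hGe' : ε' ≤ F + D := hsplit ▸ hGe
  -- randomization weight
  set g : ℝ≥0∞ := (ε' - F) / D with hgdef
  have hsubD : ε' - F ≤ D := by
    rw [tsub_le_iff_left]
    exact hGe'
  have hg1 : g ≤ 1 := by
    rcases eq_or_ne D 0 with h | h
    · have h0 : ε' - F = 0 := le_antisymm (h ▸ hsubD) zero_le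
      simp [hgdef, h0]
    · rw [hgdef, ENNReal.div_le_iff h hDt, one_mul]
      exact hsubD
  have hgt : g ≠ ⊤ := ne_top_of_le_ne_top one_ne_top hg1
  have hgD : g * D = ε' - F := by
    rcases eq_or_ne D 0 with h | h
    · have h0 : ε' - F = 0 := le_antisymm (h ▸ hsubD) zero_le
      simp [h, h0]
    · rw [hgdef, ENNReal.div_mul_cancel h hDt]
  have hTsum : F + g * D = ε' := by
    rw [hgD, add_tsub_cancel_of_le hFle]
  -- the tests
  set γ : ℝ := g.toReal with hγdef
  have hγ0 : 0 ≤ γ := ENNReal.toReal_nonneg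
  have hγ1 : γ ≤ 1 := by
    calc γ ≤ (1 : ℝ≥0∞).toReal := ENNReal.toReal_mono one_ne_top hg1
      _ = 1 := by simp
  have hγof : ENNReal.ofReal γ = g := ENNReal.ofReal_toReal hgt
  set T : Ω → ℝ := fun x => if f x < c then 1 else if f x = c then γ else 0 with hTdef
  have hTmeas : Measurable T := by
    refine Measurable.ite (hmlt c) measurable_const ?_
    exact Measurable.ite (hmeqs c) measurable_const measurable_const
  have hTmem : ∀ x, T x ∈ Set.Icc (0 : ℝ) 1 := by
    intro x
    simp only [hTdef]
    split_ifs <;> constructor <;> linarith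
  set T' : Ω → ℝ≥0∞ := fun x => if f x < c then 1 else if f x = c then g else 0 with hT'def
  set R' : Ω → ℝ≥0∞ := fun x => if f x < c then 0 else if f x = c then 1 - g else 1 with hR'def
  have hT'meas : Measurable T' := by
    refine Measurable.ite (hmlt c) measurable_const ?_
    exact Measurable.ite (hmeqs c) measurable_const measurable_const
  have hR'meas : Measurable R' := by
    refine Measurable.ite (hmlt c) measurable_const ?_
    exact Measurable.ite (hmeqs c) measurable_const measurable_const
  have hofT : ∀ x, ENNReal.ofReal (T x) = T' x := by
    intro x
    simp only [hTdef, hT'def]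
    split_ifs <;> simp [hγof]
  have hofR : ∀ x, ENNReal.ofReal (1 - T x) = R' x := by
    intro x
    simp only [hTdef, hR'def]
    split_ifs with h1 h2
    · simp
    · rw [ENNReal.ofReal_sub _ hγ0, hγof, ENNReal.ofReal_one]
    · simp
  -- type I error of T equals ε'
  have hα' : ∫⁻ x, T' x ∂W = ε' := by
    have hrepr : T' = fun x => ({x | f x < c}.indicator (fun _ => (1 : ℝ≥0∞)) x
        + {x | f x = c}.indicator (fun _ => g) x) := by
      funext x
      simp only [hT'def, Set.indicator_apply, mem_setOf_eq]
      by_cases h1 : f x < c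
      · rw [if_pos h1, if_pos h1, if_neg (ne_of_lt h1), add_zero]
      · rw [if_neg h1, if_neg h1, zero_add]
    rw [hrepr, lintegral_add_left (measurable_const.indicator (hmlt c)),
      lintegral_indicator (hmlt c), lintegral_indicator (hmeqs c),
      setLIntegral_one, setLIntegral_const]
    exact hTsum
  have hα : ∫⁻ x, ENNReal.ofReal (T x) ∂W = ε' := by
    simp only [hofT]
    exact hα'
  have hαQ : ∫⁻ x, f x * T' x ∂Q = ε' := by
    rw [← hW_int T' hT'meas]
    exact hα'
  -- type II error of T
  set b : ℝ≥0∞ := ∫⁻ x, ENNReal.ofReal (1 - T x) ∂Q with hbdef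
  have hbR : b = ∫⁻ x, R' x ∂Q := by
    rw [hbdef]
    simp only [hofR]
  have hQc : Q {x | c ≤ f x} ≠ ⊤ := by
    have hsub2 : {x | c ≤ f x} ⊆ {x | min c 1 ≤ min (f x) 1} := by
      intro x hx
      simp only [mem_setOf_eq] at hx ⊢
      exact min_le_min hx le_rfl
    have hmark := mul_meas_ge_le_lintegral₀ (μ := Q) (f := fun x => min (f x) 1)
      ((hfm.min measurable_const).aemeasurable) (min c 1)
    intro htop
    have h2 : min c 1 * Q {x | c ≤ f x} ≤ ∫⁻ x, min (f x) 1 ∂Q :=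
      le_trans (mul_le_mul_right (measure_mono hsub2) _) hmark
    rw [htop] at h2
    have hmin0 : min c 1 ≠ 0 := (lt_min (pos_iff_ne_zero.mpr hc0) zero_lt_one).ne'
    rw [ENNReal.mul_top hmin0] at h2
    exact h1 (top_le_iff.mp h2)
  have hbt : b ≠ ⊤ := by
    have hle : ∀ x, R' x ≤ {x | c ≤ f x}.indicator (fun _ => (1 : ℝ≥0∞)) x := by
      intro x
      simp only [hR'def, Set.indicator_apply, mem_setOf_eq]
      by_cases h1' : f x < c
      · simp [h1']
      · rw [if_pos (not_lt.mp h1'), if_neg h1']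
        split_ifs
        · exact tsub_le_self
        · exact le_rfl
    rw [hbR]
    refine ne_top_of_le_ne_top ?_ (lintegral_mono hle)
    rw [lintegral_indicator hmge, setLIntegral_one]
    exact hQc
  have hbQ : ∫⁻ x, R' x ∂Q = b := hbR.symm
  -- NP bound, direction 1
  have hNP1 : ∀ (U : Ω → ℝ), Measurable U → (∀ x, U x ∈ Set.Icc (0 : ℝ) 1) →
      (∫⁻ x, ENNReal.ofReal (U x) ∂W ≤ ε') →
      b ≤ ∫⁻ x, ENNReal.ofReal (1 - U x) ∂Q := by
    intro U hU hUm hUα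
    have hUmeas1 : Measurable fun x => ENNReal.ofReal (1 - U x) :=
      (measurable_const.sub hU).ennreal_ofReal
    have hUmeas2 : Measurable fun x => ENNReal.ofReal (U x) := hU.ennreal_ofReal
    have hkey : ∀ᵐ x ∂Q, R' x + c⁻¹ * (f x * T' x)
        ≤ ENNReal.ofReal (1 - U x) + c⁻¹ * (f x * ENNReal.ofReal (U x)) := by
      filter_upwards [hflt] with x hx
      simpa only [hR'def, hT'def] using
        np_pw1 hc0 hctop hg1 hx.ne (hUm x).1 (hUm x).2
    have hint := lintegral_mono_ae hkey
    rw [lintegral_add_left hR'meas, lintegral_add_left hUmeas1,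
      lintegral_const_mul _ (f := fun x => f x * T' x) (hfm.mul hT'meas), lintegral_const_mul _ (f := fun x => f x * ENNReal.ofReal (U x)) (hfm.mul hUmeas2),
      hbQ, hαQ] at hint
    have hWU : ∫⁻ x, f x * ENNReal.ofReal (U x) ∂Q = ∫⁻ x, ENNReal.ofReal (U x) ∂W :=
      (hW_int _ hUmeas2).symm
    rw [hWU] at hint
    have hfinal : b + c⁻¹ * ε' ≤ (∫⁻ x, ENNReal.ofReal (1 - U x) ∂Q) + c⁻¹ * ε' :=
      le_trans hint (add_le_add_right (mul_le_mul_right hUα _) _)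
    exact (ENNReal.add_le_add_iff_right
      (ENNReal.mul_ne_top (ENNReal.inv_ne_top.mpr hc0) hε't)).mp hfinal
  -- betaNP Q W ε = b
  have hbeta1 : betaNP Q W ε = b := by
    refine le_antisymm ?_ ?_
    · refine iInf_le_of_le T (iInf_le_of_le hTmeas (iInf_le_of_le hTmem
        (iInf_le_of_le ?_ le_rfl)))
      rw [hα]
    · simp only [betaNP, le_iInf_iff]
      intro U hU hUm hUα
      exact hNP1 U hU hUm hUα
  have hbofReal : ENNReal.ofReal (b.toReal) = b := ENNReal.ofReal_toReal hbt
  -- NP bound, direction 2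
  have hNP2 : ∀ (U : Ω → ℝ), Measurable U → (∀ x, U x ∈ Set.Icc (0 : ℝ) 1) →
      (∫⁻ x, ENNReal.ofReal (U x) ∂Q ≤ ENNReal.ofReal (b.toReal)) →
      ε' ≤ ∫⁻ x, ENNReal.ofReal (1 - U x) ∂W := by
    intro U hU hUm hUc
    rw [hbofReal] at hUc
    have hUmeas1 : Measurable fun x => ENNReal.ofReal (1 - U x) :=
      (measurable_const.sub hU).ennreal_ofReal
    have hUmeas2 : Measurable fun x => ENNReal.ofReal (U x) := hU.ennreal_ofReal
    have hkey : ∀ᵐ x ∂Q, f x * T' x + c * R' x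
        ≤ f x * ENNReal.ofReal (1 - U x) + c * ENNReal.ofReal (U x) := by
      refine ae_of_all _ fun x => ?_
      simpa only [hR'def, hT'def] using
        np_pw2 hctop hg1 (hUm x).1 (hUm x).2
    have hint := lintegral_mono_ae hkey
    rw [lintegral_add_left (f := fun x => f x * T' x) (hfm.mul hT'meas), lintegral_add_left (f := fun x => f x * ENNReal.ofReal (1 - U x)) (hfm.mul hUmeas1),
      lintegral_const_mul _ hR'meas, lintegral_const_mul _ hUmeas2,
      hbQ, hαQ] at hint
    have hWU : ∫⁻ x, f x * ENNReal.ofReal (1 - U x) ∂Q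
        = ∫⁻ x, ENNReal.ofReal (1 - U x) ∂W := (hW_int _ hUmeas1).symm
    rw [hWU] at hint
    have hfinal : ε' + c * b ≤ (∫⁻ x, ENNReal.ofReal (1 - U x) ∂W) + c * b :=
      le_trans hint (add_le_add_right (mul_le_mul_right hUc _) _)
    exact (ENNReal.add_le_add_iff_right (ENNReal.mul_ne_top hctop hbt)).mp hfinal
  -- the reversed test
  have hbeta2 : betaNP W Q b.toReal = ε' := by
    refine le_antisymm ?_ ?_
    · refine iInf_le_of_le (fun x => 1 - T x)
        (iInf_le_of_le (measurable_const.sub hTmeas) (iInf_le_of_le ?_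
          (iInf_le_of_le ?_ ?_)))
      · intro x
        have h := hTmem x
        simp only [Set.mem_Icc] at h ⊢
        constructor <;> [linarith [h.2]; linarith [h.1]]
      · rw [hbofReal]
      · have : (fun x => ENNReal.ofReal (1 - (1 - T x))) = fun x => ENNReal.ofReal (T x) := by
          funext x
          ring_nf
        rw [this, hα]
    · simp only [betaNP, le_iInf_iff]
      intro U hU hUm hUα
      exact hNP2 U hU hUm hUα
  rw [hbeta1]
  exact hbeta2
end
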